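/- (Weak Lagrangian duality for CCMF.) Let A be the incidence matrix of a directed graph with finite edge set E and finite vertex set V, let g : V → ℝ, and let c : E → ℝ. Suppose F : E → ℝ is feasible for the CCMF problem, i.e. AᵀF = 0 and |Aᵀ|F² ≤ g² entrywise. Then for every λ : V → ℝ with λ ≥ 0 and (|A|λ)_e > 0 for every edge e, and every ν : V → ℝ, one has cᵀF ≤ λᵀg² + (1/4) Σ_{e ∈ E} (c + Aν)_e² / (|A|λ)_e. -/

import Mathlib

open Matrix BigOperators

/-- `A` is the incidence matrix of a directed graph: each row (edge) has exactly one
entry `+1` and one entry `-1` at two distinct vertices, all other entries `0`. -/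
def IsIncidenceMatrix {E V : Type*} (A : Matrix E V ℝ) : Prop :=
  ∀ e : E, ∃ i j : V, i ≠ j ∧ A e i = 1 ∧ A e j = -1 ∧
    ∀ k : V, k ≠ i → k ≠ j → A e k = 0

/-- Weak Lagrangian duality for CCMF: any feasible flow value `cᵀF` is bounded by the
dual objective `λᵀg² + (1/4) Σ_e (c + Aν)_e² / (|A|λ)_e`. -/
theorem stmt_3 {E V : Type*} [Fintype E] [Fintype V] [Nonempty E] [Nonempty V]
    (A : Matrix E V ℝ) (hA : IsIncidenceMatrix A)
    (g : V → ℝ) (c : E → ℝ) (F : E → ℝ)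
    (hdiv : Aᵀ *ᵥ F = 0)
    (hcap : ∀ i : V, ∑ e, |A e i| * (F e) ^ 2 ≤ (g i) ^ 2)
    (lam : V → ℝ) (hlam : ∀ i : V, 0 ≤ lam i)
    (hpos : ∀ e : E, 0 < ∑ i, |A e i| * lam i)
    (ν : V → ℝ) :
    ∑ e, c e * F e ≤
      ∑ i, lam i * (g i) ^ 2 +
        (1 / 4) * ∑ e, (c e + (A *ᵥ ν) e) ^ 2 / (∑ i, |A e i| * lam i) := by
  set β : E → ℝ := fun e => ∑ i, |A e i| * lam i with hβ
  -- Σ (Aν)_e F_e = 0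
  have hzero : ∑ e, (A *ᵥ ν) e * F e = 0 := by
    have : ∑ e, (A *ᵥ ν) e * F e = ∑ i, ν i * (Aᵀ *ᵥ F) i := by
      simp only [mulVec, dotProduct, transpose_apply, Finset.sum_mul,
        Finset.mul_sum]
      rw [Finset.sum_comm]
      apply Finset.sum_congr rfl
      intro i _
      apply Finset.sum_congr rfl
      intro e _
      ring
    rw [this, hdiv]
    simp
  -- key pointwise bound
  have key : ∀ e, (c e + (A *ᵥ ν) e) * F e ≤
      (1 / 4) * ((c e + (A *ᵥ ν) e) ^ 2 / β e) + β e * (F e) ^ 2 := by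
    intro e
    have hb := hpos e
    rw [show (c e + (A *ᵥ ν) e) ^ 2 / β e
        = (c e + (A *ᵥ ν) e) ^ 2 * (β e)⁻¹ from div_eq_mul_inv _ _]
    have h1 : 0 < (β e)⁻¹ := inv_pos.mpr hb
    have h2 : β e * (β e)⁻¹ = 1 := mul_inv_cancel₀ (ne_of_gt hb)
    nlinarith [sq_nonneg ((c e + (A *ᵥ ν) e) - 2 * β e * F e), sq_nonneg (F e)]
  -- capacity bound
  have hcapsum : ∑ e, β e * (F e) ^ 2 ≤ ∑ i, lam i * (g i) ^ 2 := by
    have : ∑ e, β e * (F e) ^ 2 = ∑ i, lam i * ∑ e, |A e i| * (F e) ^ 2 := by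
      simp only [hβ, Finset.sum_mul, Finset.mul_sum]
      rw [Finset.sum_comm]
      apply Finset.sum_congr rfl
      intro i _
      apply Finset.sum_congr rfl
      intro e _
      ring
    rw [this]
    apply Finset.sum_le_sum
    intro i _
    exact mul_le_mul_of_nonneg_left (hcap i) (hlam i)
  calc ∑ e, c e * F e = ∑ e, (c e + (A *ᵥ ν) e) * F e := by
        rw [show ∑ e, (c e + (A *ᵥ ν) e) * F e
            = ∑ e, c e * F e + ∑ e, (A *ᵥ ν) e * F e by
          rw [← Finset.sum_add_distrib]; apply Finset.sum_congr rfl; intros; ring]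
        rw [hzero, add_zero]
    _ ≤ ∑ e, ((1 / 4) * ((c e + (A *ᵥ ν) e) ^ 2 / β e) + β e * (F e) ^ 2) :=
        Finset.sum_le_sum fun e _ => key e
    _ = ∑ e, β e * (F e) ^ 2 + (1 / 4) * ∑ e, (c e + (A *ᵥ ν) e) ^ 2 / β e := by
        rw [Finset.sum_add_distrib, Finset.mul_sum]; ring
    _ ≤ ∑ i, lam i * (g i) ^ 2 + (1 / 4) * ∑ e, (c e + (A *ᵥ ν) e) ^ 2 / β e :=
        add_le_add_left hcapsum _
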